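/- Robbins's refinement of Stirling's formula: for every n ∈ ℕ with n ≥ 1, √(2πn) (n/e)^n e^{1/(12n+1)} ≤ n! ≤ √(2πn) (n/e)^n e^{1/(12n)}. -/

import Mathlib

open Filter Finset Real Stirling Nat Topology

namespace RobbinsAux

lemma t2_lt_one (n : ℕ) : ((1:ℝ) / (2 * (↑(n+1):ℝ) + 1)) ^ 2 < 1 := by
  have h0 : (1:ℝ) ≤ (↑(n+1):ℝ) := by exact_mod_cast Nat.succ_le_succ (Nat.zero_le n)
  rw [div_pow, one_pow, div_lt_one (by positivity)]
  nlinarith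

lemma t2_nonneg (n : ℕ) : (0:ℝ) ≤ ((1:ℝ) / (2 * (↑(n+1):ℝ) + 1)) ^ 2 := sq_nonneg _

/-- lower bound on the log difference: first term of the series -/
lemma diff_ge (n : ℕ) :
    (1:ℝ)/3 * ((1 / (2 * (↑(n+1):ℝ) + 1)) ^ 2) ≤
      Real.log (stirlingSeq (n+1)) - Real.log (stirlingSeq (n+2)) := by
  have h := le_hasSum (log_stirlingSeq_diff_hasSum n) 0 (fun j _ => by positivity)
  norm_num at h ⊢
  convert h using 2 <;> norm_num

/-- upper bound: geometric series with ratio t², factor 1/3 -/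
lemma diff_le_geo (n : ℕ) :
    Real.log (stirlingSeq (n+1)) - Real.log (stirlingSeq (n+2)) ≤
      1/3 * (((1:ℝ) / (2 * (↑(n+1):ℝ) + 1)) ^ 2
        / (1 - ((1:ℝ) / (2 * (↑(n+1):ℝ) + 1)) ^ 2)) := by
  set t2 : ℝ := ((1:ℝ) / (2 * (↑(n+1):ℝ) + 1)) ^ 2 with ht2
  have h0 : (0:ℝ) ≤ t2 := t2_nonneg n
  have h1 : t2 < 1 := t2_lt_one n
  have g : HasSum (fun k : ℕ => 1/3 * t2 ^ (k+1)) (1/3 * (t2 / (1 - t2))) := by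
    have h2 : (fun k : ℕ => 1/3 * t2 ^ (k+1)) = fun k : ℕ => (1/3 * t2) * t2 ^ k := by
      funext k; ring
    have h3 : (1:ℝ)/3 * (t2 / (1 - t2)) = (1/3 * t2) * (1 - t2)⁻¹ := by
      rw [div_eq_mul_inv]; ring
    rw [h2, h3]
    exact (hasSum_geometric_of_lt_one h0 h1).mul_left _
  refine hasSum_le (fun k => ?_) (log_stirlingSeq_diff_hasSum n) g
  have hk : (1:ℝ) / (2 * (↑(k+1):ℝ) + 1) ≤ 1/3 := by
    rw [div_le_div_iff₀ (by positivity) (by norm_num)]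
    have : (1:ℝ) ≤ (↑(k+1):ℝ) := by exact_mod_cast Nat.one_le_iff_ne_zero.mpr (Nat.succ_ne_zero k)
    linarith
  exact mul_le_mul_of_nonneg_right hk (pow_nonneg h0 _)

lemma frac_eq (c : ℝ) (hc : 1 < c) : (1/c)/(1 - 1/c) = 1/(c-1) := by
  have h0 : c ≠ 0 := by linarith
  have h1 : c - 1 ≠ 0 := by linarith
  field_simp

/-- telescoping upper bound -/
lemma diff_le (n : ℕ) :
    Real.log (stirlingSeq (n+1)) - Real.log (stirlingSeq (n+2)) ≤
      1 / (12 * ((n:ℝ)+1)) - 1 / (12 * ((n:ℝ)+2)) := by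
  refine (diff_le_geo n).trans_eq ?_
  have hx : (0:ℝ) ≤ (n:ℝ) := Nat.cast_nonneg n
  push_cast
  rw [div_pow, one_pow, frac_eq _ (by nlinarith), one_div_mul_one_div,
    div_sub_div _ _ (by positivity) (by positivity),
    div_eq_div_iff (by nlinarith) (by positivity)]
  ring

/-- telescoping lower bound -/
lemma diff_ge' (n : ℕ) :
    1 / (12 * ((n:ℝ)+1) + 1) - 1 / (12 * ((n:ℝ)+2) + 1) ≤
      Real.log (stirlingSeq (n+1)) - Real.log (stirlingSeq (n+2)) := by
  refine le_trans ?_ (diff_ge n)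
  have hx : (0:ℝ) ≤ (n:ℝ) := Nat.cast_nonneg n
  push_cast
  rw [div_pow, one_pow,
    one_div_mul_one_div,
    div_sub_div _ _ (by positivity) (by positivity),
    div_le_div_iff₀ (by positivity) (by positivity)]
  nlinarith [sq_nonneg ((n:ℝ))]

noncomputable def u (n : ℕ) : ℝ := Real.log (stirlingSeq (n+1)) - 1 / (12 * ((n:ℝ)+1))

noncomputable def v (n : ℕ) : ℝ := Real.log (stirlingSeq (n+1)) - 1 / (12 * ((n:ℝ)+1) + 1)

lemma u_mono : Monotone u := by
  apply monotone_nat_of_le_succ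
  intro n
  have h := diff_le n
  simp only [u]
  push_cast
  have e : ((n:ℝ)+1+1) = (n:ℝ)+2 := by ring
  rw [e]
  linarith

lemma v_anti : Antitone v := by
  apply antitone_nat_of_succ_le
  intro n
  have h := diff_ge' n
  simp only [v]
  push_cast
  have e : ((n:ℝ)+1+1) = (n:ℝ)+2 := by ring
  rw [e]
  linarith

lemma log_tendsto :
    Tendsto (fun n => Real.log (stirlingSeq (n+1))) atTop (𝓝 (Real.log (√π))) := by
  have h2 : Tendsto (fun n : ℕ => stirlingSeq (n+1)) atTop (𝓝 (√π)) :=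
    tendsto_stirlingSeq_sqrt_pi.comp (tendsto_add_atTop_nat 1)
  exact ((Real.continuousAt_log (by positivity)).tendsto).comp h2

lemma aux_tendsto (a b : ℝ) (ha : 0 < a) (hb : 0 ≤ b) :
    Tendsto (fun n : ℕ => 1 / (a * ((n:ℝ)+1) + b)) atTop (𝓝 0) := by
  have h1 : Tendsto (fun n : ℕ => a * ((n:ℝ)+1) + b) atTop atTop := by
    apply tendsto_atTop_add_const_right
    apply Tendsto.const_mul_atTop ha
    exact tendsto_atTop_add_const_right _ _ tendsto_natCast_atTop_atTop
  simpa [one_div, Pi.inv_def] using h1.inv_tendsto_atTop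

lemma u_tendsto : Tendsto u atTop (𝓝 (Real.log (√π))) := by
  have h2 : Tendsto (fun n : ℕ => 1/(12*((n:ℝ)+1))) atTop (𝓝 0) :=
    (aux_tendsto 12 0 (by norm_num) le_rfl).congr fun n => by rw [add_zero]
  have h3 := log_tendsto.sub h2
  rw [sub_zero] at h3
  exact h3

lemma v_tendsto : Tendsto v atTop (𝓝 (Real.log (√π))) := by
  have h2 : Tendsto (fun n : ℕ => 1/(12*((n:ℝ)+1)+1)) atTop (𝓝 0) :=
    aux_tendsto 12 1 (by norm_num) (by norm_num)
  have h3 := log_tendsto.sub h2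
  rw [sub_zero] at h3
  exact h3

lemma s_lower (m : ℕ) :
    √π * Real.exp (1/(12*((m:ℝ)+1)+1)) ≤ stirlingSeq (m+1) := by
  have h := v_anti.le_of_tendsto v_tendsto m
  simp only [v] at h
  have hs : 0 < stirlingSeq (m+1) := stirlingSeq'_pos m
  have hπ : (0:ℝ) < √π := by positivity
  rw [← Real.exp_log hs, ← Real.exp_log hπ, ← Real.exp_add, Real.exp_le_exp]
  linarith

lemma s_upper (m : ℕ) :
    stirlingSeq (m+1) ≤ √π * Real.exp (1/(12*((m:ℝ)+1))) := by
  have h := u_mono.ge_of_tendsto u_tendsto m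
  simp only [u] at h
  have hs : 0 < stirlingSeq (m+1) := stirlingSeq'_pos m
  have hπ : (0:ℝ) < √π := by positivity
  rw [← Real.exp_log hs, ← Real.exp_log hπ, ← Real.exp_add, Real.exp_le_exp]
  linarith

end RobbinsAux

theorem robbins_stirling (n : ℕ) (hn : 1 ≤ n) :
    Real.sqrt (2 * Real.pi * n) * ((n : ℝ) / Real.exp 1) ^ n
        * Real.exp (1 / (12 * n + 1)) ≤ (n.factorial : ℝ) ∧
    (n.factorial : ℝ) ≤ Real.sqrt (2 * Real.pi * n) * ((n : ℝ) / Real.exp 1) ^ n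
        * Real.exp (1 / (12 * n)) := by
  obtain ⟨m, rfl⟩ : ∃ m, n = m + 1 := ⟨n - 1, by omega⟩
  have hs := RobbinsAux.s_lower m
  have hs' := RobbinsAux.s_upper m
  have hN : (0:ℝ) < (m:ℝ)+1 := by positivity
  have hD : (0:ℝ) < Real.sqrt (2*((m:ℝ)+1)) * (((m:ℝ)+1)/Real.exp 1)^(m+1) := by positivity
  have hfact : ((m+1).factorial : ℝ)
      = stirlingSeq (m+1) * (Real.sqrt (2*((m:ℝ)+1)) * (((m:ℝ)+1)/Real.exp 1)^(m+1)) := by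
    rw [Stirling.stirlingSeq]
    push_cast
    field_simp
  have hsplit : Real.sqrt (2*Real.pi*((m:ℝ)+1))
      = Real.sqrt Real.pi * Real.sqrt (2*((m:ℝ)+1)) := by
    rw [show (2*Real.pi*((m:ℝ)+1)) = Real.pi * (2*((m:ℝ)+1)) by ring,
      Real.sqrt_mul Real.pi_pos.le]
  constructor
  · push_cast
    rw [hfact, hsplit]
    calc √Real.pi * √(2*((m:ℝ)+1)) * (((m:ℝ)+1)/Real.exp 1)^(m+1)
          * Real.exp (1/(12*((m:ℝ)+1)+1))
        = (√Real.pi * Real.exp (1/(12*((m:ℝ)+1)+1)))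
            * (√(2*((m:ℝ)+1)) * (((m:ℝ)+1)/Real.exp 1)^(m+1)) := by ring
      _ ≤ stirlingSeq (m+1) * (√(2*((m:ℝ)+1)) * (((m:ℝ)+1)/Real.exp 1)^(m+1)) :=
          mul_le_mul_of_nonneg_right hs hD.le
  · push_cast
    rw [hfact, hsplit]
    calc stirlingSeq (m+1) * (√(2*((m:ℝ)+1)) * (((m:ℝ)+1)/Real.exp 1)^(m+1))
        ≤ (√Real.pi * Real.exp (1/(12*((m:ℝ)+1))))
            * (√(2*((m:ℝ)+1)) * (((m:ℝ)+1)/Real.exp 1)^(m+1)) :=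
          mul_le_mul_of_nonneg_right hs' hD.le
      _ = √Real.pi * √(2*((m:ℝ)+1)) * (((m:ℝ)+1)/Real.exp 1)^(m+1)
            * Real.exp (1/(12*((m:ℝ)+1))) := by ring
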